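/- Let d ≥ 2 and let ψ : Fin d × Fin d → ℂ be a unit vector, i.e. Σ_{i,j} |ψ(i,j)|² = 1. Let M be the d×d complex matrix with entries M_{ij} = ψ(i,j), and set a := (1 − Re(Σ_{i,j} conj(ψ(i,j))·ψ(j,i)))/2. If 1/2 ≤ a ≤ 1, then every eigenvalue of the Hermitian matrix M·Mᴴ is at most 1/2 + √(a(1−a)). -/

import Mathlib

open scoped BigOperators

open Finset

-- helper: Cauchy–Schwarz for complex sums
lemma cs_abs {ι : Type*} [Fintype ι] (f g : ι → ℂ) :
    ‖∑ i, f i * g i‖ ≤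
      Real.sqrt (∑ i, Complex.normSq (f i)) * Real.sqrt (∑ i, Complex.normSq (g i)) := by
  simp only [← Complex.sq_norm]
  have h1 : ‖∑ i, f i * g i‖ ≤ ∑ i, ‖f i‖ * ‖g i‖ := by
    refine (norm_sum_le _ _).trans (le_of_eq ?_)
    exact Finset.sum_congr rfl fun i _ => norm_mul _ _
  have h2 : (∑ i, ‖f i‖ * ‖g i‖) ^ 2 ≤
      (∑ i, ‖f i‖ ^ 2) * (∑ i, ‖g i‖ ^ 2) :=
    Finset.sum_mul_sq_le_sq_mul_sq _ _ _
  calc ‖∑ i, f i * g i‖ ≤ ∑ i, ‖f i‖ * ‖g i‖ := h1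
    _ = Real.sqrt ((∑ i, ‖f i‖ * ‖g i‖) ^ 2) :=
        (Real.sqrt_sq (by positivity)).symm
    _ ≤ Real.sqrt ((∑ i, ‖f i‖ ^ 2) * (∑ i, ‖g i‖ ^ 2)) :=
        Real.sqrt_le_sqrt h2
    _ = _ := Real.sqrt_mul (by positivity) _

lemma sum_conj_mul_self {ι : Type*} [Fintype ι] (f : ι → ℂ) :
    ∑ i, (starRingEnd ℂ) (f i) * f i = ((∑ i, Complex.normSq (f i) : ℝ) : ℂ) := by
  push_cast
  exact Finset.sum_congr rfl fun i _ => (Complex.normSq_eq_conj_mul_self).symm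

lemma sum_conj_mul_self2 {ι κ : Type*} [Fintype ι] [Fintype κ] (f : ι → κ → ℂ) :
    ∑ i, ∑ j, (starRingEnd ℂ) (f i j) * f i j = ((∑ i, ∑ j, Complex.normSq (f i j) : ℝ) : ℂ) := by
  push_cast
  exact Finset.sum_congr rfl fun i _ => by rw [sum_conj_mul_self]; push_cast; rfl

set_option maxHeartbeats 1000000 in
/-- For a bipartite unit vector `ψ : Fin d × Fin d → ℂ` with matrix of coefficients `M`,
if `a = (1 − Re ∑ᵢⱼ conj(ψ(i,j)) ψ(j,i))/2 ∈ [1/2, 1]`, then every eigenvalue of the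
Hermitian matrix `M Mᴴ` is at most `1/2 + √(a(1−a))`. -/
theorem eigenvalues_le_of_antisymmetric_overlap (d : ℕ) (hd : 2 ≤ d)
    (ψ : Fin d × Fin d → ℂ)
    (hψ : ∑ p : Fin d × Fin d, ‖ψ p‖ ^ 2 = 1)
    (M : Matrix (Fin d) (Fin d) ℂ) (hM : ∀ i j, M i j = ψ (i, j))
    (a : ℝ)
    (ha : a = (1 - (∑ i, ∑ j, (starRingEnd ℂ) (ψ (i, j)) * ψ (j, i)).re) / 2)
    (h1 : 1 / 2 ≤ a) (h2 : a ≤ 1) :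
    ∀ i, (Matrix.isHermitian_mul_conjTranspose_self M).eigenvalues i ≤
      1 / 2 + Real.sqrt (a * (1 - a)) := by
  intro i0
  classical
  by_cases hcase : (Matrix.isHermitian_mul_conjTranspose_self M).eigenvalues i0 ≤ 1/2
  · exact hcase.trans (le_add_of_nonneg_right (Real.sqrt_nonneg _))
  push_neg at hcase
  set lam : ℝ := (Matrix.isHermitian_mul_conjTranspose_self M).eigenvalues i0 with hlamdef
  set u : Fin d → ℂ := ⇑((Matrix.isHermitian_mul_conjTranspose_self M).eigenvectorBasis i0) with hudef
  have hunorm : ∑ k, Complex.normSq (u k) = 1 := by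
    have hn1 : ‖(Matrix.isHermitian_mul_conjTranspose_self M).eigenvectorBasis i0‖ = 1 :=
      (Matrix.isHermitian_mul_conjTranspose_self M).eigenvectorBasis.orthonormal.1 i0
    have hn2 := EuclideanSpace.norm_eq
      ((Matrix.isHermitian_mul_conjTranspose_self M).eigenvectorBasis i0)
    rw [hn1] at hn2
    have hn3 : ∑ k, ‖u k‖ ^ 2 = 1 := by
      have := hn2.symm
      rw [Real.sqrt_eq_one] at this
      simpa [hudef] using this
    simpa [← Complex.sq_norm] using hn3
  have heig : ∀ k, (∑ i, (M * M.conjTranspose) k i * u i) = (lam : ℂ) * u k := by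
    intro k
    have h := congrFun ((Matrix.isHermitian_mul_conjTranspose_self M).mulVec_eigenvectorBasis i0) k
    simpa [Matrix.mulVec, dotProduct, hudef, Complex.real_smul] using h
  have hent : ∀ k i, (M * M.conjTranspose) k i = ∑ j, ψ (k, j) * (starRingEnd ℂ) (ψ (i, j)) := by
    intro k i
    simp [Matrix.mul_apply, Matrix.conjTranspose_apply, hM]
  -- definitions
  obtain ⟨x, hx⟩ : ∃ x : Fin d → ℂ, ∀ j, x j = ∑ i, (starRingEnd ℂ) (u i) * ψ (i, j) :=
    ⟨_, fun _ => rfl⟩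
  obtain ⟨p, hp⟩ : ∃ p : Fin d → Fin d → ℂ, ∀ i j, p i j = ψ (i, j) - u i * x j :=
    ⟨_, fun _ _ => rfl⟩
  obtain ⟨y, hy⟩ : ∃ y : Fin d → ℂ, ∀ i, y i = ∑ m, (starRingEnd ℂ) (u m) * p i m :=
    ⟨_, fun _ => rfl⟩
  obtain ⟨e, he⟩ : ∃ e : Fin d → Fin d → ℂ, ∀ i j, e i j = p i j - y i * u j :=
    ⟨_, fun _ _ => rfl⟩
  have hunormC : (∑ k, (starRingEnd ℂ) (u k) * u k) = 1 := by
    rw [sum_conj_mul_self, hunorm, Complex.ofReal_one]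
  -- F1 : first-slot orthogonality of p to u
  have hF1 : ∀ j, ∑ i, (starRingEnd ℂ) (u i) * p i j = 0 := by
    intro j
    calc ∑ i, (starRingEnd ℂ) (u i) * p i j
        = (∑ i, (starRingEnd ℂ) (u i) * ψ (i, j)) - (∑ i, (starRingEnd ℂ) (u i) * u i) * x j := by
          rw [Finset.sum_mul, ← Finset.sum_sub_distrib]
          exact Finset.sum_congr rfl fun i _ => by rw [hp]; ring
      _ = 0 := by rw [← hx, hunormC, one_mul, sub_self]
  -- beta = 0
  have hbeta : ∑ i, (starRingEnd ℂ) (u i) * y i = 0 := by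
    calc ∑ i, (starRingEnd ℂ) (u i) * y i
        = ∑ i, ∑ m, (starRingEnd ℂ) (u m) * ((starRingEnd ℂ) (u i) * p i m) := by
          refine Finset.sum_congr rfl fun i _ => ?_
          rw [hy, Finset.mul_sum]
          exact Finset.sum_congr rfl fun m _ => by ring
      _ = ∑ m, (starRingEnd ℂ) (u m) * ∑ i, (starRingEnd ℂ) (u i) * p i m := by
          rw [Finset.sum_comm]
          exact Finset.sum_congr rfl fun m _ => by rw [Finset.mul_sum]
      _ = 0 := by simp [hF1]
  -- F4 : second-slot orthogonality of e to u
  have hF4 : ∀ i, ∑ j, (starRingEnd ℂ) (u j) * e i j = 0 := by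
    intro i
    calc ∑ j, (starRingEnd ℂ) (u j) * e i j
        = (∑ j, (starRingEnd ℂ) (u j) * p i j) - y i * ∑ j, (starRingEnd ℂ) (u j) * u j := by
          rw [Finset.mul_sum, ← Finset.sum_sub_distrib]
          exact Finset.sum_congr rfl fun j _ => by rw [he]; ring
      _ = 0 := by rw [← hy, hunormC, mul_one, sub_self]
  -- F5 : first-slot orthogonality of e to u
  have hF5 : ∀ j, ∑ i, (starRingEnd ℂ) (u i) * e i j = 0 := by
    intro j
    calc ∑ i, (starRingEnd ℂ) (u i) * e i j
        = (∑ i, (starRingEnd ℂ) (u i) * p i j) - (∑ i, (starRingEnd ℂ) (u i) * y i) * u j := by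
          rw [Finset.sum_mul, ← Finset.sum_sub_distrib]
          exact Finset.sum_congr rfl fun i _ => by rw [he]; ring
      _ = 0 := by rw [hF1, hbeta, zero_mul, sub_self]
  -- norm of x equals lam (via the eigenvalue equation)
  have hxlamC : (∑ j, (starRingEnd ℂ) (x j) * x j) = (lam : ℂ) := by
    calc ∑ j, (starRingEnd ℂ) (x j) * x j
        = ∑ j, ∑ i, ∑ k, (u i * (starRingEnd ℂ) (ψ (i, j))) * ((starRingEnd ℂ) (u k) * ψ (k, j)) := by
          refine Finset.sum_congr rfl fun j _ => ?_
          rw [hx, map_sum, Finset.sum_mul_sum]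
          refine Finset.sum_congr rfl fun i _ => Finset.sum_congr rfl fun k _ => ?_
          rw [map_mul, Complex.conj_conj]
      _ = ∑ i, ∑ j, ∑ k, (u i * (starRingEnd ℂ) (ψ (i, j))) * ((starRingEnd ℂ) (u k) * ψ (k, j)) := by
          rw [Finset.sum_comm]
      _ = ∑ i, ∑ k, ∑ j, (u i * (starRingEnd ℂ) (ψ (i, j))) * ((starRingEnd ℂ) (u k) * ψ (k, j)) := by
          exact Finset.sum_congr rfl fun i _ => Finset.sum_comm
      _ = ∑ k, ∑ i, ∑ j, (starRingEnd ℂ) (u k) * ((ψ (k, j) * (starRingEnd ℂ) (ψ (i, j))) * u i) := by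
          rw [Finset.sum_comm]
          refine Finset.sum_congr rfl fun k _ => Finset.sum_congr rfl fun i _ =>
            Finset.sum_congr rfl fun j _ => by ring
      _ = ∑ k, (starRingEnd ℂ) (u k) * ∑ i, (∑ j, ψ (k, j) * (starRingEnd ℂ) (ψ (i, j))) * u i := by
          refine Finset.sum_congr rfl fun k _ => ?_
          rw [Finset.mul_sum]
          refine Finset.sum_congr rfl fun i _ => ?_
          rw [Finset.sum_mul, Finset.mul_sum]
      _ = ∑ k, (starRingEnd ℂ) (u k) * ((lam : ℂ) * u k) := by
          refine Finset.sum_congr rfl fun k _ => ?_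
          congr 1
          calc ∑ i, (∑ j, ψ (k, j) * (starRingEnd ℂ) (ψ (i, j))) * u i
              = ∑ i, (M * M.conjTranspose) k i * u i :=
                Finset.sum_congr rfl fun i _ => by rw [hent]
            _ = (lam : ℂ) * u k := heig k
      _ = (lam : ℂ) * ∑ k, (starRingEnd ℂ) (u k) * u k := by
          rw [Finset.mul_sum]
          exact Finset.sum_congr rfl fun k _ => by ring
      _ = (lam : ℂ) := by rw [hunormC, mul_one]
  have hxlam : ∑ j, Complex.normSq (x j) = lam := by
    have := hxlamC
    rw [sum_conj_mul_self] at this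
    exact_mod_cast this
  -- total norm of psi
  have hψtotalC : (∑ i, ∑ j, (starRingEnd ℂ) (ψ (i, j)) * ψ (i, j)) = 1 := by
    have h := hψ
    rw [Fintype.sum_prod_type] at h
    have h' : ∑ i, ∑ j, Complex.normSq (ψ (i, j)) = 1 := by
      simpa [← Complex.sq_norm] using h
    rw [sum_conj_mul_self2, h', Complex.ofReal_one]
  -- Pythagoras I : norm of p is 1 - lam
  have hTux : ∑ i, ∑ j, (starRingEnd ℂ) (u i * x j) * (u i * x j) = (lam : ℂ) := by
    calc ∑ i, ∑ j, (starRingEnd ℂ) (u i * x j) * (u i * x j)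
        = (∑ i, (starRingEnd ℂ) (u i) * u i) * (∑ j, (starRingEnd ℂ) (x j) * x j) := by
          rw [Finset.sum_mul_sum]
          exact Finset.sum_congr rfl fun i _ => Finset.sum_congr rfl fun j _ => by
            simp only [map_mul]; ring
      _ = 1 * (lam : ℂ) := by rw [hunormC, hxlamC]
      _ = (lam : ℂ) := one_mul _
  have hcross1 : ∑ i, ∑ j, (starRingEnd ℂ) (u i * x j) * p i j = 0 := by
    rw [Finset.sum_comm]
    refine Finset.sum_eq_zero fun j _ => ?_
    calc ∑ i, (starRingEnd ℂ) (u i * x j) * p i j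
        = (starRingEnd ℂ) (x j) * ∑ i, (starRingEnd ℂ) (u i) * p i j := by
          rw [Finset.mul_sum]
          exact Finset.sum_congr rfl fun i _ => by simp only [map_mul]; ring
      _ = 0 := by rw [hF1, mul_zero]
  have hcross2 : ∑ i, ∑ j, (starRingEnd ℂ) (p i j) * (u i * x j) = 0 := by
    rw [Finset.sum_comm]
    refine Finset.sum_eq_zero fun j _ => ?_
    have hconj : ∑ i, u i * (starRingEnd ℂ) (p i j)
        = (starRingEnd ℂ) (∑ i, (starRingEnd ℂ) (u i) * p i j) := by
      rw [map_sum]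
      exact Finset.sum_congr rfl fun i _ => by rw [map_mul, Complex.conj_conj]
    calc ∑ i, (starRingEnd ℂ) (p i j) * (u i * x j)
        = x j * ∑ i, u i * (starRingEnd ℂ) (p i j) := by
          rw [Finset.mul_sum]
          exact Finset.sum_congr rfl fun i _ => by ring
      _ = 0 := by rw [hconj, hF1, map_zero, mul_zero]
  have hpnormC : ∑ i, ∑ j, (starRingEnd ℂ) (p i j) * p i j = ((1 - lam : ℝ) : ℂ) := by
    have hsum : (1 : ℂ) = (lam : ℂ) + 0 + 0 + ∑ i, ∑ j, (starRingEnd ℂ) (p i j) * p i j := by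
      calc (1 : ℂ) = ∑ i, ∑ j, (starRingEnd ℂ) (ψ (i, j)) * ψ (i, j) := hψtotalC.symm
        _ = ∑ i, ∑ j, ((starRingEnd ℂ) (u i * x j) * (u i * x j)
              + (starRingEnd ℂ) (u i * x j) * p i j
              + (starRingEnd ℂ) (p i j) * (u i * x j)
              + (starRingEnd ℂ) (p i j) * p i j) := by
            refine Finset.sum_congr rfl fun i _ => Finset.sum_congr rfl fun j _ => ?_
            have hpe : ψ (i, j) = u i * x j + p i j := by rw [hp]; ring
            rw [hpe, map_add]; ring
        _ = _ := by
            simp only [Finset.sum_add_distrib]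
            rw [hTux, hcross1, hcross2]
    push_cast
    linear_combination -hsum
  -- Pythagoras II : norms of the pieces of p
  have hTzeta : ∑ i, ∑ j, (starRingEnd ℂ) (y i * u j) * (y i * u j)
      = ((∑ i, Complex.normSq (y i) : ℝ) : ℂ) := by
    calc ∑ i, ∑ j, (starRingEnd ℂ) (y i * u j) * (y i * u j)
        = (∑ i, (starRingEnd ℂ) (y i) * y i) * (∑ j, (starRingEnd ℂ) (u j) * u j) := by
          rw [Finset.sum_mul_sum]
          exact Finset.sum_congr rfl fun i _ => Finset.sum_congr rfl fun j _ => by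
            simp only [map_mul]; ring
      _ = _ := by rw [hunormC, mul_one, sum_conj_mul_self]
  have hcross3 : ∑ i, ∑ j, (starRingEnd ℂ) (y i * u j) * e i j = 0 := by
    refine Finset.sum_eq_zero fun i _ => ?_
    calc ∑ j, (starRingEnd ℂ) (y i * u j) * e i j
        = (starRingEnd ℂ) (y i) * ∑ j, (starRingEnd ℂ) (u j) * e i j := by
          rw [Finset.mul_sum]
          exact Finset.sum_congr rfl fun j _ => by simp only [map_mul]; ring
      _ = 0 := by rw [hF4, mul_zero]
  have hcross4 : ∑ i, ∑ j, (starRingEnd ℂ) (e i j) * (y i * u j) = 0 := by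
    refine Finset.sum_eq_zero fun i _ => ?_
    have hconj : ∑ j, u j * (starRingEnd ℂ) (e i j)
        = (starRingEnd ℂ) (∑ j, (starRingEnd ℂ) (u j) * e i j) := by
      rw [map_sum]
      exact Finset.sum_congr rfl fun j _ => by rw [map_mul, Complex.conj_conj]
    calc ∑ j, (starRingEnd ℂ) (e i j) * (y i * u j)
        = y i * ∑ j, u j * (starRingEnd ℂ) (e i j) := by
          rw [Finset.mul_sum]
          exact Finset.sum_congr rfl fun j _ => by ring
      _ = 0 := by rw [hconj, hF4, map_zero, mul_zero]
  have hmh : (∑ i, Complex.normSq (y i)) + (∑ i, ∑ j, Complex.normSq (e i j)) = 1 - lam := by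
    have hsum : ((1 - lam : ℝ) : ℂ) = ((∑ i, Complex.normSq (y i) : ℝ) : ℂ) + 0 + 0
        + ((∑ i, ∑ j, Complex.normSq (e i j) : ℝ) : ℂ) := by
      calc ((1 - lam : ℝ) : ℂ) = ∑ i, ∑ j, (starRingEnd ℂ) (p i j) * p i j := hpnormC.symm
        _ = ∑ i, ∑ j, ((starRingEnd ℂ) (y i * u j) * (y i * u j)
              + (starRingEnd ℂ) (y i * u j) * e i j
              + (starRingEnd ℂ) (e i j) * (y i * u j)
              + (starRingEnd ℂ) (e i j) * e i j) := by
            refine Finset.sum_congr rfl fun i _ => Finset.sum_congr rfl fun j _ => ?_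
            have hpe : p i j = y i * u j + e i j := by rw [he]; ring
            rw [hpe, map_add]; ring
        _ = _ := by
            simp only [Finset.sum_add_distrib]
            rw [hTzeta, hcross3, hcross4, sum_conj_mul_self2]
    have h' : ((1 - lam : ℝ) : ℂ)
        = (((∑ i, Complex.normSq (y i)) + (∑ i, ∑ j, Complex.normSq (e i j)) : ℝ) : ℂ) := by
      push_cast at hsum ⊢
      linear_combination hsum
    have h'' := Complex.ofReal_inj.mp h'
    linarith
  -- abbreviations
  obtain ⟨c, hc⟩ : ∃ c : ℂ, c = ∑ i, (starRingEnd ℂ) (u i) * x i := ⟨_, rfl⟩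
  obtain ⟨w, hw⟩ : ∃ w : ℂ, w = ∑ j, (starRingEnd ℂ) (x j) * y j := ⟨_, rfl⟩
  obtain ⟨E, hE⟩ : ∃ E : ℂ, E = ∑ i, ∑ j, (starRingEnd ℂ) (e i j) * e j i := ⟨_, rfl⟩
  have hconjc : (starRingEnd ℂ) c = ∑ j, (starRingEnd ℂ) (x j) * u j := by
    rw [hc, map_sum]
    exact Finset.sum_congr rfl fun i _ => by rw [map_mul, Complex.conj_conj]; ring
  have hconjw : (starRingEnd ℂ) w = ∑ i, (starRingEnd ℂ) (y i) * x i := by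
    rw [hw, map_sum]
    exact Finset.sum_congr rfl fun i _ => by rw [map_mul, Complex.conj_conj]; ring
  -- the nine terms
  have hT1 : ∑ i, ∑ j, (starRingEnd ℂ) (u i * x j) * (u j * x i) = c * (starRingEnd ℂ) c := by
    rw [hconjc, hc, Finset.sum_mul_sum]
    exact Finset.sum_congr rfl fun i _ => Finset.sum_congr rfl fun j _ => by
      simp only [map_mul]; ring
  have hT2 : ∑ i, ∑ j, (starRingEnd ℂ) (u i * x j) * (y j * u i) = w := by
    have : (∑ i, (starRingEnd ℂ) (u i) * u i) * (∑ j, (starRingEnd ℂ) (x j) * y j)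
        = ∑ i, ∑ j, (starRingEnd ℂ) (u i * x j) * (y j * u i) := by
      rw [Finset.sum_mul_sum]
      exact Finset.sum_congr rfl fun i _ => Finset.sum_congr rfl fun j _ => by
        simp only [map_mul]; ring
    rw [← this, hunormC, one_mul, hw]
  have hT4 : ∑ i, ∑ j, (starRingEnd ℂ) (y i * u j) * (u j * x i) = (starRingEnd ℂ) w := by
    have : (∑ i, (starRingEnd ℂ) (y i) * x i) * (∑ j, (starRingEnd ℂ) (u j) * u j)
        = ∑ i, ∑ j, (starRingEnd ℂ) (y i * u j) * (u j * x i) := by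
      rw [Finset.sum_mul_sum]
      exact Finset.sum_congr rfl fun i _ => Finset.sum_congr rfl fun j _ => by
        simp only [map_mul]; ring
    rw [← this, hunormC, mul_one, hconjw]
  have hT5 : ∑ i, ∑ j, (starRingEnd ℂ) (y i * u j) * (y j * u i) = 0 := by
    have : (∑ i, (starRingEnd ℂ) (y i) * u i) * (∑ j, (starRingEnd ℂ) (u j) * y j)
        = ∑ i, ∑ j, (starRingEnd ℂ) (y i * u j) * (y j * u i) := by
      rw [Finset.sum_mul_sum]
      exact Finset.sum_congr rfl fun i _ => Finset.sum_congr rfl fun j _ => by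
        simp only [map_mul]; ring
    rw [← this, hbeta, mul_zero]
  have hT3 : ∑ i, ∑ j, (starRingEnd ℂ) (u i * x j) * e j i = 0 := by
    rw [Finset.sum_comm]
    refine Finset.sum_eq_zero fun j _ => ?_
    calc ∑ i, (starRingEnd ℂ) (u i * x j) * e j i
        = (starRingEnd ℂ) (x j) * ∑ i, (starRingEnd ℂ) (u i) * e j i := by
          rw [Finset.mul_sum]
          exact Finset.sum_congr rfl fun i _ => by simp only [map_mul]; ring
      _ = 0 := by rw [hF4, mul_zero]
  have hT6 : ∑ i, ∑ j, (starRingEnd ℂ) (y i * u j) * e j i = 0 := by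
    refine Finset.sum_eq_zero fun i _ => ?_
    calc ∑ j, (starRingEnd ℂ) (y i * u j) * e j i
        = (starRingEnd ℂ) (y i) * ∑ j, (starRingEnd ℂ) (u j) * e j i := by
          rw [Finset.mul_sum]
          exact Finset.sum_congr rfl fun j _ => by simp only [map_mul]; ring
      _ = 0 := by rw [hF5, mul_zero]
  have hT7 : ∑ i, ∑ j, (starRingEnd ℂ) (e i j) * (u j * x i) = 0 := by
    refine Finset.sum_eq_zero fun i _ => ?_
    have hcj : ∑ j, u j * (starRingEnd ℂ) (e i j)
        = (starRingEnd ℂ) (∑ j, (starRingEnd ℂ) (u j) * e i j) := by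
      rw [map_sum]
      exact Finset.sum_congr rfl fun j _ => by rw [map_mul, Complex.conj_conj]
    calc ∑ j, (starRingEnd ℂ) (e i j) * (u j * x i)
        = x i * ∑ j, u j * (starRingEnd ℂ) (e i j) := by
          rw [Finset.mul_sum]
          exact Finset.sum_congr rfl fun j _ => by ring
      _ = 0 := by rw [hcj, hF4, map_zero, mul_zero]
  have hT8 : ∑ i, ∑ j, (starRingEnd ℂ) (e i j) * (y j * u i) = 0 := by
    rw [Finset.sum_comm]
    refine Finset.sum_eq_zero fun j _ => ?_
    have hcj : ∑ i, u i * (starRingEnd ℂ) (e i j)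
        = (starRingEnd ℂ) (∑ i, (starRingEnd ℂ) (u i) * e i j) := by
      rw [map_sum]
      exact Finset.sum_congr rfl fun i _ => by rw [map_mul, Complex.conj_conj]
    calc ∑ i, (starRingEnd ℂ) (e i j) * (y j * u i)
        = y j * ∑ i, u i * (starRingEnd ℂ) (e i j) := by
          rw [Finset.mul_sum]
          exact Finset.sum_congr rfl fun i _ => by ring
      _ = 0 := by rw [hcj, hF5, map_zero, mul_zero]
  -- the expansion
  have hdec : ∀ i j, ψ (i, j) = u i * x j + y i * u j + e i j := by
    intro i j; rw [he, hp]; ring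
  have hS : (∑ i, ∑ j, (starRingEnd ℂ) (ψ (i, j)) * ψ (j, i))
      = c * (starRingEnd ℂ) c + w + (starRingEnd ℂ) w + E := by
    calc ∑ i, ∑ j, (starRingEnd ℂ) (ψ (i, j)) * ψ (j, i)
        = ∑ i, ∑ j, ((starRingEnd ℂ) (u i * x j) * (u j * x i)
            + (starRingEnd ℂ) (u i * x j) * (y j * u i)
            + (starRingEnd ℂ) (u i * x j) * e j i
            + (starRingEnd ℂ) (y i * u j) * (u j * x i)
            + (starRingEnd ℂ) (y i * u j) * (y j * u i)
            + (starRingEnd ℂ) (y i * u j) * e j i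
            + (starRingEnd ℂ) (e i j) * (u j * x i)
            + (starRingEnd ℂ) (e i j) * (y j * u i)
            + (starRingEnd ℂ) (e i j) * e j i) := by
          refine Finset.sum_congr rfl fun i _ => Finset.sum_congr rfl fun j _ => ?_
          rw [hdec i j, hdec j i, map_add, map_add]; ring
      _ = c * (starRingEnd ℂ) c + w + (starRingEnd ℂ) w + E := by
          simp only [Finset.sum_add_distrib]
          rw [hT1, hT2, hT3, hT4, hT5, hT6, hT7, hT8, ← hE]
          ring
  -- bounds
  have hmmnn : (0:ℝ) ≤ ∑ i, Complex.normSq (y i) :=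
    Finset.sum_nonneg fun i _ => Complex.normSq_nonneg _
  have hhhnn : (0:ℝ) ≤ ∑ i, ∑ j, Complex.normSq (e i j) :=
    Finset.sum_nonneg fun i _ => Finset.sum_nonneg fun j _ => Complex.normSq_nonneg _
  have hlam0 : (0:ℝ) ≤ lam := by linarith
  have hlam1 : lam ≤ 1 := by linarith [hmmnn, hhhnn, hmh]
  have habsw : ‖w‖ ≤ Real.sqrt lam * Real.sqrt (∑ i, Complex.normSq (y i)) := by
    rw [hw]
    have := cs_abs (fun j => (starRingEnd ℂ) (x j)) y
    simpa [Complex.normSq_conj, hxlam] using this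
  have habsE : ‖E‖ ≤ ∑ i, ∑ j, Complex.normSq (e i j) := by
    have hEprod : E = ∑ q : Fin d × Fin d, (starRingEnd ℂ) (e q.1 q.2) * e q.2 q.1 := by
      rw [hE]
      exact (Fintype.sum_prod_type
        (fun q : Fin d × Fin d => (starRingEnd ℂ) (e q.1 q.2) * e q.2 q.1)).symm
    have hswap : ∑ q : Fin d × Fin d, Complex.normSq (e q.2 q.1)
        = ∑ q : Fin d × Fin d, Complex.normSq (e q.1 q.2) :=
      Fintype.sum_equiv (Equiv.prodComm _ _) _ _ (fun q => rfl)
    have hprodnorm : ∑ q : Fin d × Fin d, Complex.normSq (e q.1 q.2)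
        = ∑ i, ∑ j, Complex.normSq (e i j) := Fintype.sum_prod_type _
    have := cs_abs (fun q : Fin d × Fin d => (starRingEnd ℂ) (e q.1 q.2))
      (fun q : Fin d × Fin d => e q.2 q.1)
    rw [hEprod]
    refine this.trans (le_of_eq ?_)
    simp only [Complex.normSq_conj, hswap, hprodnorm]
    exact Real.mul_self_sqrt hhhnn
  have hwre : -(Real.sqrt lam * Real.sqrt (∑ i, Complex.normSq (y i))) ≤ w.re :=
    le_trans (neg_le_neg habsw) ((abs_le.mp (Complex.abs_re_le_norm w)).1)
  have hEre : -(∑ i, ∑ j, Complex.normSq (e i j)) ≤ E.re :=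
    le_trans (neg_le_neg habsE) ((abs_le.mp (Complex.abs_re_le_norm E)).1)
  have hSre : (∑ i, ∑ j, (starRingEnd ℂ) (ψ (i, j)) * ψ (j, i)).re
      = Complex.normSq c + 2 * w.re + E.re := by
    rw [hS]
    simp only [Complex.add_re, Complex.mul_conj, Complex.ofReal_re, Complex.conj_re]
    ring
  -- the key sqrt inequality
  have hkey : 2 * (Real.sqrt lam * Real.sqrt (∑ i, Complex.normSq (y i)))
      + (∑ i, ∑ j, Complex.normSq (e i j)) ≤ 2 * Real.sqrt (lam * (1 - lam)) := by
    have h1l : (0:ℝ) ≤ 1 - lam := by linarith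
    have hr2 : (Real.sqrt lam) ^ 2 = lam := Real.sq_sqrt hlam0
    have hq2 : (Real.sqrt (1 - lam)) ^ 2 = 1 - lam := Real.sq_sqrt h1l
    have hs2 : (Real.sqrt (∑ i, Complex.normSq (y i))) ^ 2 = ∑ i, Complex.normSq (y i) :=
      Real.sq_sqrt hmmnn
    have hsq : Real.sqrt (∑ i, Complex.normSq (y i)) ≤ Real.sqrt (1 - lam) :=
      Real.sqrt_le_sqrt (by linarith [hmh, hhhnn])
    have hqr : Real.sqrt (1 - lam) ≤ Real.sqrt lam :=
      Real.sqrt_le_sqrt (by linarith)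
    have hmul : Real.sqrt (lam * (1 - lam)) = Real.sqrt lam * Real.sqrt (1 - lam) :=
      Real.sqrt_mul hlam0 _
    rw [hmul]
    have hpos : (0:ℝ) ≤ 2 * Real.sqrt lam
        - (Real.sqrt (1 - lam) + Real.sqrt (∑ i, Complex.normSq (y i))) := by
      linarith
    have hprod := mul_nonneg (sub_nonneg.2 hsq) hpos
    nlinarith [hprod, hmh]
  -- conclude
  have hage : a - 1/2 ≤ Real.sqrt (lam * (1 - lam)) := by
    rw [ha]
    have : -(2 * Real.sqrt (lam * (1 - lam)))
        ≤ (∑ i, ∑ j, (starRingEnd ℂ) (ψ (i, j)) * ψ (j, i)).re := by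
      rw [hSre]
      have := Complex.normSq_nonneg c
      linarith
    linarith
  have hsq' : (a - 1/2) ^ 2 ≤ lam * (1 - lam) := by
    have h0 : (0:ℝ) ≤ a - 1/2 := by linarith
    calc (a - 1/2) ^ 2 ≤ (Real.sqrt (lam * (1 - lam))) ^ 2 := by
          exact pow_le_pow_left₀ h0 hage 2
      _ = lam * (1 - lam) := Real.sq_sqrt (mul_nonneg hlam0 (by linarith))
  have hfin : (lam - 1/2) ^ 2 ≤ a * (1 - a) := by nlinarith [hsq']
  have hmono := Real.sqrt_le_sqrt hfin
  rw [Real.sqrt_sq (by linarith : (0:ℝ) ≤ lam - 1/2)] at hmono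
  linarith
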